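/- For every integer n ≥ 4, there exists a 4-diagonal magic square of order n: an n × n array containing each of 0,...,4n−1 exactly once, with exactly 4 filled cells in each row and each column, all filled cells lying on 4 consecutive broken diagonals, and every row and column sum equal to 2(4n−1) = 8n−2. -/

import Mathlib

/-- An `n × n` partially filled array with entries `0,…,k*n-1` each occurring exactly once,
exactly `k` filled cells in each row and each column, and every row sum and column sum
equal to `S`. -/
def IsMagicWithSum (n k S : ℕ) (M : Fin n → Fin n → Option ℕ) : Prop :=
  (∀ e < k * n, ∃! p : Fin n × Fin n, M p.1 p.2 = some e) ∧
  (∀ i j : Fin n, ∀ e, M i j = some e → e < k * n) ∧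
  (∀ i : Fin n, (Finset.univ.filter fun j => (M i j).isSome).card = k) ∧
  (∀ j : Fin n, (Finset.univ.filter fun i => (M i j).isSome).card = k) ∧
  (∀ i : Fin n, ∑ j, (M i j).getD 0 = S) ∧
  (∀ j : Fin n, ∑ i, (M i j).getD 0 = S)

/-- A `k`-magic square of order `n`: some common magic sum works. -/
def IsKMagic (n k : ℕ) (M : Fin n → Fin n → Option ℕ) : Prop :=
  ∃ S, IsMagicWithSum n k S M

/-- All filled cells lie on `k` consecutive broken diagonals, i.e. there is a shift `d`
such that every filled cell `(i, j)` satisfies `j = (i + d + t) % n` for some `t < k`. -/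
def IsKDiagonal (n k : ℕ) (M : Fin n → Fin n → Option ℕ) : Prop :=
  ∃ d : ℕ, ∀ i j : Fin n, (M i j).isSome → ∃ t < k, (j : ℕ) = ((i : ℕ) + d + t) % n

/-- A `k`-diagonal magic square of order `n`. -/
def IsDiagonalMagic (n k : ℕ) (M : Fin n → Fin n → Option ℕ) : Prop :=
  IsKMagic n k M ∧ IsKDiagonal n k M

namespace FourDiag

/-- the involution used on diagonals 2 and 3 -/
def c (n i : ℕ) : ℕ := if i = n - 2 then n - 1 else if i = n - 1 then n - 2 else n - 3 - i

/-- the value placed at diagonal `t`, row `i` -/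
def v (n t i : ℕ) : ℕ :=
  if t = 0 then i else if t = 1 then 3 * n - 1 - i
  else if t = 2 then n + c n i else 4 * n - 1 - c n i

/-- the square itself -/
def Mk (n : ℕ) (i j : Fin n) : Option ℕ :=
  if ((j : ℕ) + n - (i : ℕ)) % n < 4 then some (v n (((j : ℕ) + n - (i : ℕ)) % n) i) else none

lemma c_lt {n i : ℕ} (hn : 4 ≤ n) (hi : i < n) : c n i < n := by
  unfold c; split_ifs <;> omega

lemma c_c {n i : ℕ} (hn : 4 ≤ n) (hi : i < n) : c n (c n i) = i := by
  unfold c; split_ifs <;> omega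

lemma v_lt {n t i : ℕ} (hn : 4 ≤ n) (hi : i < n) : v n t i < 4 * n := by
  have := c_lt hn hi; unfold v; split_ifs <;> omega

lemma v0 (n i : ℕ) : v n 0 i = i := by simp [v]
lemma v1 (n i : ℕ) : v n 1 i = 3 * n - 1 - i := by simp [v]
lemma v2 (n i : ℕ) : v n 2 i = n + c n i := by simp [v]
lemma v3 (n i : ℕ) : v n 3 i = 4 * n - 1 - c n i := by simp [v]

lemma mod2 {n a : ℕ} (hn : 0 < n) (h : a < 2 * n) : a % n = if a < n then a else a - n := by
  split_ifs with h1
  · exact Nat.mod_eq_of_lt h1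
  · rw [Nat.mod_eq_sub_mod (by omega)]
    exact Nat.mod_eq_of_lt (by omega)

lemma jd {n i j : ℕ} (hn : 4 ≤ n) (hi : i < n) (hj : j < n) :
    (i + (j + n - i) % n) % n = j := by
  rw [mod2 (by omega) (show j + n - i < 2 * n by omega)]
  split_ifs with h
  · rw [show i + (j + n - i) = j + n by omega, Nat.add_mod_right]
    exact Nat.mod_eq_of_lt hj
  · rw [show i + (j + n - i - n) = j by omega]
    exact Nat.mod_eq_of_lt hj

lemma dt {n i t : ℕ} (hn : 4 ≤ n) (hi : i < n) (ht : t < 4) :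
    ((i + t) % n + n - i) % n = t := by
  rw [mod2 (by omega) (show i + t < 2 * n by omega)]
  split_ifs with h
  · rw [show i + t + n - i = t + n by omega, Nat.add_mod_right]
    exact Nat.mod_eq_of_lt (by omega)
  · rw [show i + t - n + n - i = t by omega]
    exact Nat.mod_eq_of_lt (by omega)

lemma ct {n j t : ℕ} (hn : 4 ≤ n) (hj : j < n) (ht : t < 4) :
    (j + n - (j + n - t) % n) % n = t := by
  rw [mod2 (by omega) (show j + n - t < 2 * n by omega)]
  split_ifs with h
  · rw [show j + n - (j + n - t) = t by omega]
    exact Nat.mod_eq_of_lt (by omega)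
  · rw [show j + n - (j + n - t - n) = n + t by omega, Nat.add_mod_left]
    exact Nat.mod_eq_of_lt (by omega)

lemma inv {n i j t : ℕ} (hn : 4 ≤ n) (hi : i < n) (hj : j < n) (ht : t < 4)
    (h : (j + n - i) % n = t) : i = (j + n - t) % n := by
  rw [mod2 (by omega) (show j + n - i < 2 * n by omega)] at h
  rw [mod2 (by omega) (show j + n - t < 2 * n by omega)]
  split_ifs at h ⊢ <;> omega

lemma v_det {n t i t' i' : ℕ} (hn : 4 ≤ n) (ht : t < 4) (ht' : t' < 4) (hi : i < n)
    (hi' : i' < n) (h : v n t i = v n t' i') : t = t' ∧ i = i' := by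
  have hci := c_lt hn hi
  have hci' := c_lt hn hi'
  interval_cases t <;> interval_cases t' <;> simp only [v0, v1, v2, v3] at h <;>
  first
  | omega
  | exact ⟨rfl, by
      have h2 : c n i = c n i' := by omega
      have h3 := congrArg (c n) h2
      rwa [c_c hn hi, c_c hn hi'] at h3⟩

lemma colsum {n j : ℕ} (hn : 4 ≤ n) (hj : j < n) :
    0 + (j + n - 0) % n + (3 * n - 1 - (j + n - 1) % n) + (n + c n ((j + n - 2) % n)) +
      (4 * n - 1 - c n ((j + n - 3) % n)) = 8 * n - 2 := by
  have hn0 : 0 < n := by omega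
  rcases Nat.lt_or_ge j 3 with h3 | h3
  · interval_cases j
    · have e0 : (0 + n - 0) % n = 0 := by rw [mod2 hn0 (by omega)]; split_ifs <;> omega
      have e1 : (0 + n - 1) % n = n - 1 := by rw [mod2 hn0 (by omega)]; split_ifs <;> omega
      have e2 : (0 + n - 2) % n = n - 2 := by rw [mod2 hn0 (by omega)]; split_ifs <;> omega
      have e3 : (0 + n - 3) % n = n - 3 := by rw [mod2 hn0 (by omega)]; split_ifs <;> omega
      have c2 : c n (n - 2) = n - 1 := by unfold c; split_ifs <;> omega
      have c3 : c n (n - 3) = 0 := by unfold c; split_ifs <;> omega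
      rw [e0, e1, e2, e3, c2, c3]; omega
    · have e0 : (1 + n - 0) % n = 1 := by rw [mod2 hn0 (by omega)]; split_ifs <;> omega
      have e1 : (1 + n - 1) % n = 0 := by rw [mod2 hn0 (by omega)]; split_ifs <;> omega
      have e2 : (1 + n - 2) % n = n - 1 := by rw [mod2 hn0 (by omega)]; split_ifs <;> omega
      have e3 : (1 + n - 3) % n = n - 2 := by rw [mod2 hn0 (by omega)]; split_ifs <;> omega
      have c2 : c n (n - 1) = n - 2 := by unfold c; split_ifs <;> omega
      have c3 : c n (n - 2) = n - 1 := by unfold c; split_ifs <;> omega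
      rw [e0, e1, e2, e3, c2, c3]; omega
    · have e0 : (2 + n - 0) % n = 2 := by rw [mod2 hn0 (by omega)]; split_ifs <;> omega
      have e1 : (2 + n - 1) % n = 1 := by rw [mod2 hn0 (by omega)]; split_ifs <;> omega
      have e2 : (2 + n - 2) % n = 0 := by rw [mod2 hn0 (by omega)]; split_ifs <;> omega
      have e3 : (2 + n - 3) % n = n - 1 := by rw [mod2 hn0 (by omega)]; split_ifs <;> omega
      have c2 : c n 0 = n - 3 := by unfold c; split_ifs <;> omega
      have c3 : c n (n - 1) = n - 2 := by unfold c; split_ifs <;> omega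
      rw [e0, e1, e2, e3, c2, c3]; omega
  · have e0 : (j + n - 0) % n = j := by rw [mod2 hn0 (by omega)]; split_ifs <;> omega
    have e1 : (j + n - 1) % n = j - 1 := by rw [mod2 hn0 (by omega)]; split_ifs <;> omega
    have e2 : (j + n - 2) % n = j - 2 := by rw [mod2 hn0 (by omega)]; split_ifs <;> omega
    have e3 : (j + n - 3) % n = j - 3 := by rw [mod2 hn0 (by omega)]; split_ifs <;> omega
    have c2 : c n (j - 2) = n - 3 - (j - 2) := by unfold c; split_ifs <;> omega
    have c3 : c n (j - 3) = n - 3 - (j - 3) := by unfold c; split_ifs <;> omega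
    rw [e0, e1, e2, e3, c2, c3]; omega

lemma Mk_isSome {n : ℕ} (i j : Fin n) :
    (Mk n i j).isSome ↔ ((j : ℕ) + n - (i : ℕ)) % n < 4 := by
  unfold Mk; split_ifs with h <;> simp [h]

lemma Mk_diag {n : ℕ} (hn : 4 ≤ n) (i : Fin n) (t : ℕ) (ht : t < 4) :
    Mk n i ⟨((i : ℕ) + t) % n, Nat.mod_lt _ (by omega)⟩ = some (v n t i) := by
  unfold Mk
  rw [dt hn i.isLt ht, if_pos ht]

end FourDiag

open FourDiag in
theorem four_diagonal_magic_square (n : ℕ) (hn : 4 ≤ n) :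
    ∃ M : Fin n → Fin n → Option ℕ,
      IsMagicWithSum n 4 (8 * n - 2) M ∧ IsKDiagonal n 4 M := by
  classical
  have hn0 : 0 < n := by omega
  refine ⟨Mk n, ⟨?_, ?_, ?_, ?_, ?_, ?_⟩, ?_⟩
  · -- each entry exactly once
    intro e he
    have he4 : e < 4 * n := by omega
    -- existence of the (t, i) data
    have exu : ∃ t < 4, ∃ i < n, v n t i = e := by
      rcases lt_or_ge e n with h1 | h1
      · exact ⟨0, by omega, e, by omega, v0 n e⟩
      rcases lt_or_ge e (2 * n) with h2 | h2
      · refine ⟨2, by omega, c n (e - n), c_lt hn (by omega), ?_⟩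
        rw [v2, c_c hn (by omega)]; omega
      rcases lt_or_ge e (3 * n) with h3 | h3
      · refine ⟨1, by omega, 3 * n - 1 - e, by omega, ?_⟩
        rw [v1]; omega
      · refine ⟨3, by omega, c n (4 * n - 1 - e), c_lt hn (by omega), ?_⟩
        rw [v3, c_c hn (by omega)]; omega
    obtain ⟨t, ht, i, hi, hv⟩ := exu
    refine ⟨(⟨i, hi⟩, ⟨(i + t) % n, Nat.mod_lt _ hn0⟩), ?_, ?_⟩
    · show Mk n _ _ = some e
      rw [Mk_diag hn ⟨i, hi⟩ t ht]; exact congrArg some hv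
    · rintro ⟨p1, p2⟩ hp
      simp only [Mk] at hp
      split_ifs at hp with hd
      · have hv' : v n (((p2 : ℕ) + n - (p1 : ℕ)) % n) (p1 : ℕ) = e :=
          Option.some.inj hp
        obtain ⟨hteq, hieq⟩ :=
          v_det hn hd ht p1.isLt hi (hv'.trans hv.symm)
        have hj2 : ((p1 : ℕ) + ((p2 : ℕ) + n - (p1 : ℕ)) % n) % n = (p2 : ℕ) :=
          jd hn p1.isLt p2.isLt
        have h1 : p1 = ⟨i, hi⟩ := Fin.ext hieq
        have h2 : p2 = ⟨(i + t) % n, Nat.mod_lt _ hn0⟩ := by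
          apply Fin.ext
          show (p2 : ℕ) = (i + t) % n
          rw [← hieq, ← hteq]
          exact hj2.symm
        rw [h1, h2]
  · -- entries bounded
    intro i j e h
    simp only [Mk] at h
    split_ifs at h with hd
    · have := Option.some.inj h
      rw [← this]
      exact v_lt hn i.isLt
  · -- row counts
    intro i
    have hset : Finset.univ.filter (fun j => (Mk n i j).isSome) =
        (Finset.range 4).image (fun t => (⟨((i : ℕ) + t) % n, Nat.mod_lt _ hn0⟩ : Fin n)) := by
      ext j
      simp only [Finset.mem_filter, Finset.mem_univ, true_and, Finset.mem_image,
        Finset.mem_range, Mk_isSome]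
      constructor
      · intro h
        exact ⟨_, h, by ext; simp [jd hn i.isLt j.isLt]⟩
      · rintro ⟨t, ht, rfl⟩
        simpa [dt hn i.isLt ht] using ht
    rw [hset, Finset.card_image_of_injOn, Finset.card_range]
    intro t1 h1 t2 h2 h
    simp only [Finset.coe_range, Set.mem_Iio] at h1 h2
    have := congrArg (fun x : Fin n => ((x : ℕ) + n - (i : ℕ)) % n) h
    simpa [dt hn i.isLt h1, dt hn i.isLt h2] using this
  · -- column counts
    intro j
    have hset : Finset.univ.filter (fun i => (Mk n i j).isSome) =
        (Finset.range 4).image (fun t => (⟨((j : ℕ) + n - t) % n, Nat.mod_lt _ hn0⟩ : Fin n)) := by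
      ext i
      simp only [Finset.mem_filter, Finset.mem_univ, true_and, Finset.mem_image,
        Finset.mem_range, Mk_isSome]
      constructor
      · intro h
        refine ⟨_, h, ?_⟩
        ext
        exact (inv hn i.isLt j.isLt h rfl).symm
      · rintro ⟨t, ht, rfl⟩
        simpa [ct hn j.isLt ht] using ht
    rw [hset, Finset.card_image_of_injOn, Finset.card_range]
    intro t1 h1 t2 h2 h
    simp only [Finset.coe_range, Set.mem_Iio] at h1 h2
    have := congrArg (fun x : Fin n => ((j : ℕ) + n - (x : ℕ)) % n) h
    simpa [ct hn j.isLt h1, ct hn j.isLt h2] using this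
  · -- row sums
    intro i
    have hstep : ∑ j, (Mk n i j).getD 0 =
        ∑ j ∈ Finset.univ.filter (fun j => (Mk n i j).isSome), (Mk n i j).getD 0 := by
      refine (Finset.sum_subset (Finset.filter_subset _ _) ?_).symm
      intro x _ hx
      simp only [Finset.mem_filter, Finset.mem_univ, true_and] at hx
      cases h : Mk n i x
      · simp
      · exact absurd (by simp [h]) hx
    rw [hstep]
    have hset : Finset.univ.filter (fun j => (Mk n i j).isSome) =
        (Finset.range 4).image (fun t => (⟨((i : ℕ) + t) % n, Nat.mod_lt _ hn0⟩ : Fin n)) := by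
      ext j
      simp only [Finset.mem_filter, Finset.mem_univ, true_and, Finset.mem_image,
        Finset.mem_range, Mk_isSome]
      constructor
      · intro h
        exact ⟨_, h, by ext; simp [jd hn i.isLt j.isLt]⟩
      · rintro ⟨t, ht, rfl⟩
        simpa [dt hn i.isLt ht] using ht
    rw [hset, Finset.sum_image]
    · have : ∀ t ∈ Finset.range 4,
          (Mk n i ⟨((i : ℕ) + t) % n, Nat.mod_lt _ hn0⟩).getD 0 = v n t i := by
        intro t ht
        rw [Mk_diag hn i t (Finset.mem_range.mp ht)]; rfl
      rw [Finset.sum_congr rfl this]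
      have hci := c_lt hn i.isLt
      have hi := i.isLt
      simp only [Finset.sum_range_succ, Finset.sum_range_zero, v0, v1, v2, v3]
      omega
    · intro t1 h1 t2 h2 h
      simp only [Finset.coe_range, Set.mem_Iio] at h1 h2
      have := congrArg (fun x : Fin n => ((x : ℕ) + n - (i : ℕ)) % n) h
      simpa [dt hn i.isLt h1, dt hn i.isLt h2] using this
  · -- column sums
    intro j
    have hstep : ∑ i, (Mk n i j).getD 0 =
        ∑ i ∈ Finset.univ.filter (fun i => (Mk n i j).isSome), (Mk n i j).getD 0 := by
      refine (Finset.sum_subset (Finset.filter_subset _ _) ?_).symm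
      intro x _ hx
      simp only [Finset.mem_filter, Finset.mem_univ, true_and] at hx
      cases h : Mk n x j
      · simp
      · exact absurd (by simp [h]) hx
    rw [hstep]
    have hset : Finset.univ.filter (fun i => (Mk n i j).isSome) =
        (Finset.range 4).image (fun t => (⟨((j : ℕ) + n - t) % n, Nat.mod_lt _ hn0⟩ : Fin n)) := by
      ext i
      simp only [Finset.mem_filter, Finset.mem_univ, true_and, Finset.mem_image,
        Finset.mem_range, Mk_isSome]
      constructor
      · intro h
        refine ⟨_, h, ?_⟩
        ext
        exact (inv hn i.isLt j.isLt h rfl).symm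
      · rintro ⟨t, ht, rfl⟩
        simpa [ct hn j.isLt ht] using ht
    rw [hset, Finset.sum_image]
    · have hterm : ∀ t ∈ Finset.range 4,
          (Mk n (⟨((j : ℕ) + n - t) % n, Nat.mod_lt _ hn0⟩ : Fin n) j).getD 0 =
            v n t (((j : ℕ) + n - t) % n) := by
        intro t ht
        have ht4 := Finset.mem_range.mp ht
        simp only [Mk]
        rw [ct hn j.isLt ht4, if_pos ht4]
        rfl
      rw [Finset.sum_congr rfl hterm]
      have hj := j.isLt
      simp only [Finset.sum_range_succ, Finset.sum_range_zero, v0, v1, v2, v3]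
      exact colsum hn j.isLt
    · intro t1 h1 t2 h2 h
      simp only [Finset.coe_range, Set.mem_Iio] at h1 h2
      have := congrArg (fun x : Fin n => ((j : ℕ) + n - (x : ℕ)) % n) h
      simpa [ct hn j.isLt h1, ct hn j.isLt h2] using this
  · -- diagonality
    refine ⟨0, fun i j h => ?_⟩
    rw [Mk_isSome] at h
    exact ⟨((j : ℕ) + n - (i : ℕ)) % n, h, by
      simp only [Nat.add_zero]
      exact (jd hn i.isLt j.isLt).symm⟩
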